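/- Let G be a finite group and H a subgroup of index q = p₁^{α₁} ⋯ p_k^{α_k} (primes p₁ < ⋯ < p_k). Then ψ'_H(G) := ψ_H(G)/ψ_{H_m}(C_n) < ∏_{i=1}^k (p_i + 1)/p_i ≤ (3/2)^k, where n = |G|, m = |H|, and H_m is the unique subgroup of order m of C_n. -/

import Mathlib

open Finset

/-- The order of `x` relative to the subgroup `H`: the least positive `m` with `x ^ m ∈ H`. -/
noncomputable def relOrder {G : Type*} [Group G] (H : Subgroup G) (x : G) : ℕ :=
  sInf {m : ℕ | 0 < m ∧ x ^ m ∈ H}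

/-- `ψ_H(G)`, the sum of element orders of `G` relative to the subgroup `H`. -/
noncomputable def psiRel (G : Type*) [Group G] [Fintype G] (H : Subgroup G) : ℕ :=
  ∑ x : G, relOrder H x

/-- `ψ(G)`, the sum of element orders of `G`. -/
noncomputable def psi (G : Type*) [Group G] [Fintype G] : ℕ :=
  ∑ x : G, orderOf x

section Aux

variable {G : Type*} [Group G] [Fintype G] (H : Subgroup G)

lemma relOrder_spec (x : G) : 0 < relOrder H x ∧ x ^ relOrder H x ∈ H := by
  have hne : {m : ℕ | 0 < m ∧ x ^ m ∈ H}.Nonempty :=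
    ⟨orderOf x, orderOf_pos x, by simp [pow_orderOf_eq_one, H.one_mem]⟩
  exact Nat.sInf_mem hne

lemma relOrder_le_of {x : G} {m : ℕ} (hm : 0 < m) (h : x ^ m ∈ H) : relOrder H x ≤ m :=
  Nat.sInf_le ⟨hm, h⟩

lemma relOrder_le_index (x : G) : relOrder H x ≤ H.index := by
  classical
  set d := relOrder H x with hd
  have key : ∀ i j : Fin d, (i : ℕ) < (j : ℕ) →
      (QuotientGroup.mk (x ^ (i : ℕ)) : G ⧸ H) ≠ QuotientGroup.mk (x ^ (j : ℕ)) := by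
    intro i j hlt heq
    have hx : (x ^ (i : ℕ))⁻¹ * x ^ (j : ℕ) ∈ H := QuotientGroup.eq.mp heq
    have hxx : (x ^ (i : ℕ))⁻¹ * x ^ (j : ℕ) = x ^ ((j : ℕ) - (i : ℕ)) := by
      rw [inv_mul_eq_iff_eq_mul, ← pow_add]
      congr 1
      omega
    rw [hxx] at hx
    have hle := relOrder_le_of H (Nat.sub_pos_of_lt hlt) hx
    have hlt2 : (j : ℕ) - (i : ℕ) < d := lt_of_le_of_lt (Nat.sub_le _ _) j.2
    rw [← hd] at hle
    omega
  have hinj : Function.Injective (fun i : Fin d => (QuotientGroup.mk (x ^ (i : ℕ)) : G ⧸ H)) := by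
    intro i j hij
    rcases lt_trichotomy (i : ℕ) (j : ℕ) with h | h | h
    · exact absurd hij (key i j h)
    · exact Fin.ext h
    · exact absurd hij.symm (key j i h)
  have hcard := Fintype.card_le_of_injective _ hinj
  simpa [Subgroup.index, Nat.card_eq_fintype_card] using hcard

lemma psiRel_le_card_mul_index : psiRel G H ≤ Fintype.card G * H.index := by
  calc psiRel G H ≤ ∑ _x : G, H.index := Finset.sum_le_sum fun x _ => relOrder_le_index H x
    _ = Fintype.card G * H.index := by simp [Finset.sum_const, mul_comm]

lemma relOrder_eq_orderOf_mk [H.Normal] (x : G) :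
    relOrder H x = orderOf (QuotientGroup.mk x : G ⧸ H) := by
  have key : ∀ m : ℕ, x ^ m ∈ H ↔ (QuotientGroup.mk x : G ⧸ H) ^ m = 1 := fun m => by
    rw [← QuotientGroup.mk_pow, QuotientGroup.eq_one_iff]
  refine le_antisymm ?_ ?_
  · exact relOrder_le_of H (orderOf_pos _) ((key _).mpr (pow_orderOf_eq_one _))
  · obtain ⟨hpos, hmem⟩ := relOrder_spec H x
    exact Nat.le_of_dvd hpos (orderOf_dvd_of_pow_eq_one ((key _).mp hmem))

lemma card_fiber_mk (y : G ⧸ H) [DecidableEq (G ⧸ H)] :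
    (Finset.univ.filter fun x : G => (QuotientGroup.mk x : G ⧸ H) = y).card = Nat.card H := by
  classical
  obtain ⟨g, rfl⟩ := QuotientGroup.mk_surjective y
  have e : {x : G // (QuotientGroup.mk x : G ⧸ H) = QuotientGroup.mk g} ≃ H :=
    { toFun := fun x => ⟨g⁻¹ * x.1, by
        have := QuotientGroup.eq.mp x.2
        have h2 := H.inv_mem this
        simpa using h2⟩
      invFun := fun h => ⟨g * h.1, by
        rw [eq_comm, QuotientGroup.eq]
        simpa using h.2⟩
      left_inv := fun x => by ext; simp
      right_inv := fun h => by ext; simp }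
  rw [← Fintype.card_subtype, Fintype.card_congr e, Nat.card_eq_fintype_card]

lemma psiRel_normal [H.Normal] [Fintype (G ⧸ H)] :
    psiRel G H = Nat.card H * psi (G ⧸ H) := by
  classical
  have := Finset.sum_fiberwise' (Finset.univ : Finset G)
      (fun x => (QuotientGroup.mk x : G ⧸ H)) (fun y : G ⧸ H => orderOf y)
  rw [psiRel]
  calc ∑ x : G, relOrder H x = ∑ x : G, orderOf (QuotientGroup.mk x : G ⧸ H) := by
        simp [relOrder_eq_orderOf_mk]
    _ = ∑ y : G ⧸ H, ∑ _x ∈ Finset.univ.filter (fun x : G => (QuotientGroup.mk x : G ⧸ H) = y),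
          orderOf y := this.symm
    _ = ∑ y : G ⧸ H, Nat.card H * orderOf y := by
        refine Finset.sum_congr rfl fun y _ => ?_
        rw [Finset.sum_const, card_fiber_mk, smul_eq_mul]
    _ = Nat.card H * psi (G ⧸ H) := by rw [← Finset.mul_sum, psi]

lemma psi_cyclic (C : Type*) [Group C] [Fintype C] [IsCyclic C] :
    psi C = ∑ d ∈ (Fintype.card C).divisors, d * d.totient := by
  classical
  rw [psi, ← Finset.sum_fiberwise_of_maps_to
      (g := fun x : C => orderOf x) (t := (Fintype.card C).divisors)
      (fun x _ => Nat.mem_divisors.mpr ⟨orderOf_dvd_card, Fintype.card_ne_zero⟩)]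
  refine Finset.sum_congr rfl fun d hd => ?_
  have hdvd : d ∣ Fintype.card C := (Nat.mem_divisors.mp hd).1
  calc ∑ x ∈ Finset.univ.filter fun x : C => orderOf x = d, orderOf x
      = ∑ _x ∈ Finset.univ.filter fun x : C => orderOf x = d, d :=
        Finset.sum_congr rfl fun x hx => (Finset.mem_filter.mp hx).2
    _ = (Finset.univ.filter fun x : C => orderOf x = d).card * d := by
        rw [Finset.sum_const, smul_eq_mul]
    _ = d * d.totient := by rw [IsCyclic.card_orderOf_eq_totient hdvd, mul_comm]

end Aux

section NumberTheory

open ArithmeticFunction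

/-- The totient as an arithmetic function. -/
noncomputable def phiAF : ArithmeticFunction ℕ := ⟨fun n => n.totient, by simp⟩

lemma phiAF_apply (n : ℕ) : phiAF n = n.totient := rfl

lemma phiAF_mult : phiAF.IsMultiplicative :=
  ⟨by simp [phiAF_apply], fun h => by simp [phiAF_apply, Nat.totient_mul h]⟩

/-- `SAF n = ∑_{d ∣ n} d φ(d)`. -/
noncomputable def SAF : ArithmeticFunction ℕ := zeta * (ArithmeticFunction.pmul .id phiAF)

lemma SAF_apply (n : ℕ) : SAF n = ∑ d ∈ n.divisors, d * d.totient := by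
  rw [SAF, zeta_mul_apply]
  refine Finset.sum_congr rfl fun d _ => ?_
  rw [ArithmeticFunction.pmul_apply, ArithmeticFunction.id_apply, phiAF_apply]

lemma SAF_mult : SAF.IsMultiplicative :=
  isMultiplicative_zeta.mul (isMultiplicative_id.pmul phiAF_mult)

lemma SAF_prime_pow {p : ℕ} (hp : p.Prime) (k : ℕ) :
    SAF (p ^ k) = ∑ i ∈ Finset.range (k + 1), p ^ i * (p ^ i).totient := by
  rw [SAF_apply, Nat.divisors_prime_pow hp, Finset.sum_map]
  rfl

lemma T_key {p : ℕ} (hp : p.Prime) (k : ℕ) :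
    (p + 1) * ∑ i ∈ Finset.range (k + 1), p ^ i * (p ^ i).totient = p ^ (2 * k + 1) + 1 := by
  induction k with
  | zero => simp
  | succ k ih =>
    rw [Finset.sum_range_succ, Nat.mul_add, ih, Nat.totient_prime_pow hp (Nat.succ_pos k)]
    have h1 : 1 ≤ p := hp.one_le
    simp only [Nat.succ_sub_one]
    zify [h1]
    ring

lemma SAF_prime_pow_lt {p : ℕ} (hp : p.Prime) {k : ℕ} (hk : 0 < k) :
    (p : ℚ) ^ (2 * k) * ((p : ℚ) / (p + 1)) < (SAF (p ^ k) : ℚ) := by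
  have hp0 : (0 : ℚ) < p := by exact_mod_cast hp.pos
  have hp1 : (0 : ℚ) < (p : ℚ) + 1 := by positivity
  rw [mul_div_assoc' , div_lt_iff₀ hp1]
  have hT : ((SAF (p ^ k) : ℕ) : ℚ) * ((p : ℚ) + 1) = (p : ℚ) ^ (2 * k + 1) + 1 := by
    rw [SAF_prime_pow hp]
    rw [mul_comm]
    exact_mod_cast congrArg (Nat.cast : ℕ → ℚ) (T_key hp k)
  rw [hT, pow_succ]
  nlinarith [pow_pos hp0 (2 * k)]

lemma SAF_pos {q : ℕ} (hq : q ≠ 0) : 0 < SAF q := by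
  rw [SAF_apply]
  refine Finset.sum_pos ?_ ⟨1, Nat.one_mem_divisors.mpr hq⟩
  intro d hd
  have hd0 : 0 < d := Nat.pos_of_mem_divisors hd
  have : 0 < d.totient := Nat.totient_pos.mpr hd0
  positivity

/-- The key number-theoretic estimate. -/
lemma key_nt {q : ℕ} (hq : 1 < q) :
    (q : ℚ) ^ 2 * ∏ p ∈ q.primeFactors, (p : ℚ) / (p + 1) < (SAF q : ℚ) := by
  have hq0 : q ≠ 0 := by omega
  have hfact : SAF q = ∏ p ∈ q.primeFactors, SAF (p ^ q.factorization p) := by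
    rw [SAF_mult.multiplicative_factorization SAF hq0, Finsupp.prod, Nat.support_factorization]
  have hqprod : (q : ℚ) = ∏ p ∈ q.primeFactors, (p : ℚ) ^ q.factorization p := by
    conv_lhs => rw [← Nat.factorization_prod_pow_eq_self hq0]
    rw [Finsupp.prod, Nat.support_factorization]
    push_cast
    rfl
  have hlhs : (q : ℚ) ^ 2 * ∏ p ∈ q.primeFactors, (p : ℚ) / (p + 1)
      = ∏ p ∈ q.primeFactors, ((p : ℚ) ^ (2 * q.factorization p) * ((p : ℚ) / (p + 1))) := by
    rw [Finset.prod_mul_distrib, hqprod, ← Finset.prod_pow]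
    congr 1
    refine Finset.prod_congr rfl fun p _ => ?_
    rw [← pow_mul, mul_comm (q.factorization p) 2]
  rw [hlhs, hfact]
  push_cast
  refine Finset.prod_lt_prod_of_nonempty ?_ ?_ (Nat.nonempty_primeFactors.mpr hq)
  · intro p hp
    have hpp : p.Prime := Nat.prime_of_mem_primeFactors hp
    have hp0 : (0 : ℚ) < p := by exact_mod_cast hpp.pos
    positivity
  · intro p hp
    have hpp : p.Prime := Nat.prime_of_mem_primeFactors hp
    have hk : 0 < q.factorization p := Nat.Prime.factorization_pos_of_dvd hpp hq0
      (Nat.dvd_of_mem_primeFactors hp)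
    exact_mod_cast SAF_prime_pow_lt hpp hk

end NumberTheory

theorem psiRel_ratio_lt_prod {G : Type*} [Group G] [Fintype G] (H : Subgroup G)
    (hq : 1 < H.index)
    (n : ℕ) [NeZero n] (hn : n = Fintype.card G)
    (K : Subgroup (Multiplicative (ZMod n))) (hK : Nat.card K = Nat.card H) :
    (psiRel G H : ℚ) / (psiRel (Multiplicative (ZMod n)) K : ℚ) <
        ∏ p ∈ H.index.primeFactors, ((p : ℚ) + 1) / p ∧
      ∏ p ∈ H.index.primeFactors, ((p : ℚ) + 1) / p ≤
        (3 / 2 : ℚ) ^ H.index.primeFactors.card := by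
  classical
  set q := H.index with hqdef
  set m := Nat.card H with hmdef
  have hm0 : 0 < m := Nat.card_pos
  -- cardinalities
  have hcardG : m * q = n := by
    rw [hn, hmdef, hqdef, ← Nat.card_eq_fintype_card]
    exact H.card_mul_index
  have hcardK : Nat.card K * K.index = n := by
    rw [K.card_mul_index, Nat.card_eq_fintype_card]
    simp [ZMod.card]
  have hKindex : K.index = q := by
    have e1 : m * K.index = n := by rw [← hK]; exact hcardK
    exact Nat.eq_of_mul_eq_mul_left hm0 (e1.trans hcardG.symm)
  -- quotient of C_n by K
  have hKnormal : K.Normal := Subgroup.normal_of_comm K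
  have hcyc : IsCyclic (Multiplicative (ZMod n) ⧸ K) :=
    isCyclic_of_surjective _ (QuotientGroup.mk'_surjective K)
  have hcardQ : Fintype.card (Multiplicative (ZMod n) ⧸ K) = q := by
    rw [← Nat.card_eq_fintype_card, ← hKindex]
    rfl
  have hB : psiRel (Multiplicative (ZMod n)) K = m * SAF q := by
    rw [psiRel_normal K, psi_cyclic, hcardQ, SAF_apply, hK, hmdef]
  -- bounds
  have hA : psiRel G H ≤ m * q * q := by
    calc psiRel G H ≤ Fintype.card G * H.index := psiRel_le_card_mul_index H
      _ = m * q * q := by rw [← hn, ← hcardG]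
  have hSAFpos : 0 < SAF q := SAF_pos (by omega)
  have hBpos : (0 : ℚ) < (psiRel (Multiplicative (ZMod n)) K : ℚ) := by
    rw [hB]
    positivity
  -- products
  have hprime : ∀ p ∈ q.primeFactors, (0 : ℚ) < p := fun p hp => by
    exact_mod_cast (Nat.prime_of_mem_primeFactors hp).pos
  have hPQ : (∏ p ∈ q.primeFactors, ((p : ℚ) + 1) / p) *
      (∏ p ∈ q.primeFactors, (p : ℚ) / (p + 1)) = 1 := by
    rw [← Finset.prod_mul_distrib]
    refine Finset.prod_eq_one fun p hp => ?_
    have hp0 : (0 : ℚ) < p := hprime p hp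
    field_simp
  have hQpos : (0 : ℚ) < ∏ p ∈ q.primeFactors, (p : ℚ) / (p + 1) := by
    refine Finset.prod_pos fun p hp => ?_
    have := hprime p hp
    positivity
  have hPpos : (0 : ℚ) < ∏ p ∈ q.primeFactors, ((p : ℚ) + 1) / p := by
    refine Finset.prod_pos fun p hp => ?_
    have := hprime p hp
    positivity
  constructor
  · rw [div_lt_iff₀ hBpos, hB]
    have hkey := key_nt (q := q) hq
    -- q^2 < P * SAF q
    have h2 : (q : ℚ) ^ 2 < (∏ p ∈ q.primeFactors, ((p : ℚ) + 1) / p) * (SAF q : ℚ) := by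
      have hstep := mul_lt_mul_of_pos_left hkey hPpos
      calc (q : ℚ) ^ 2
          = (q : ℚ) ^ 2 * ((∏ p ∈ q.primeFactors, ((p : ℚ) + 1) / p) *
              ∏ p ∈ q.primeFactors, (p : ℚ) / (p + 1)) := by rw [hPQ, mul_one]
        _ = (∏ p ∈ q.primeFactors, ((p : ℚ) + 1) / p) *
              ((q : ℚ) ^ 2 * ∏ p ∈ q.primeFactors, (p : ℚ) / (p + 1)) := by ring
        _ < _ := hstep
    calc (psiRel G H : ℚ) ≤ (m : ℚ) * q * q := by exact_mod_cast hA
      _ = (m : ℚ) * (q : ℚ) ^ 2 := by ring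
      _ < (m : ℚ) * ((∏ p ∈ q.primeFactors, ((p : ℚ) + 1) / p) * (SAF q : ℚ)) := by
          have hm0' : (0 : ℚ) < m := by exact_mod_cast hm0
          exact mul_lt_mul_of_pos_left h2 hm0'
      _ = (∏ p ∈ q.primeFactors, ((p : ℚ) + 1) / p) * ((m * SAF q : ℕ) : ℚ) := by
          push_cast; ring
  · calc ∏ p ∈ q.primeFactors, ((p : ℚ) + 1) / p
        ≤ ∏ _p ∈ q.primeFactors, (3 / 2 : ℚ) := by
          refine Finset.prod_le_prod ?_ ?_
          · intro p hp
            have := hprime p hp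
            positivity
          · intro p hp
            have hpp := Nat.prime_of_mem_primeFactors hp
            have hp2 : (2 : ℚ) ≤ p := by exact_mod_cast hpp.two_le
            have hp0 : (0 : ℚ) < p := by linarith
            rw [div_le_div_iff₀ hp0 (by norm_num)]
            linarith
      _ = (3 / 2 : ℚ) ^ q.primeFactors.card := by rw [Finset.prod_const]
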